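/- Let c > 1 be an integer and H = (V, E) a c-hypergraph (every hyperedge is a subset of V of size exactly c) with |V| ≥ c and density at least ε > 0, i.e., |E| ≥ ε·binom(|V|, c). Then H has a matching (a set of pairwise disjoint hyperedges) of size at least (ε/c²)·(|V| − c + 1). -/

import Mathlib

/-- Every dense `c`-hypergraph has a large matching. -/
theorem stmt13 {V : Type*} [Fintype V] [DecidableEq V] (c : ℕ) (hc : 1 < c)
    (hcV : c ≤ Fintype.card V)
    (E : Finset (Finset V)) (hE : ∀ e ∈ E, e.card = c)
    (ε : ℝ) (hε : 0 < ε)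
    (hdens : ε * ((Fintype.card V).choose c : ℝ) ≤ (E.card : ℝ)) :
    ∃ M ⊆ E, (∀ a ∈ M, ∀ b ∈ M, a ≠ b → Disjoint a b) ∧
      ε / (c : ℝ) ^ 2 * ((Fintype.card V : ℝ) - (c : ℝ) + 1) ≤ (M.card : ℝ) := by
  classical
  set n := Fintype.card V with hn
  -- the finset of matchings
  set P : Finset (Finset (Finset V)) := E.powerset.filter
    (fun M => ∀ a ∈ M, ∀ b ∈ M, a ≠ b → Disjoint a b) with hP
  have hPne : (∅ : Finset (Finset V)) ∈ P := by simp [hP]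
  obtain ⟨M, hM, hmax⟩ := P.exists_max_image (fun M => M.card) ⟨∅, hPne⟩
  have hM' := hM
  simp only [hP, Finset.mem_filter, Finset.mem_powerset] at hM'
  obtain ⟨hME, hMd⟩ := hM'
  refine ⟨M, hME, hMd, ?_⟩
  -- every edge meets some edge of M
  have hmeet : ∀ e ∈ E, ∃ m ∈ M, ¬ Disjoint e m := by
    intro e he
    by_contra h
    push_neg at h
    have heM : e ∉ M := by
      intro hem
      have := h e hem
      rw [disjoint_self] at this
      have hc0 : e.card = c := hE e he
      rw [this] at hc0
      simp at hc0
      omega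
    have hins : insert e M ∈ P := by
      simp only [hP, Finset.mem_filter, Finset.mem_powerset]
      constructor
      · exact Finset.insert_subset he hME
      · intro a ha b hb hab
        rcases Finset.mem_insert.mp ha with ha' | ha' <;>
          rcases Finset.mem_insert.mp hb with hb' | hb'
        · exact absurd (ha'.trans hb'.symm) hab
        · exact ha' ▸ h b hb'
        · exact hb' ▸ (h a ha').symm
        · exact hMd a ha' b hb' hab
    have := hmax _ hins
    rw [Finset.card_insert_of_notMem heM] at this
    omega
  -- covering vertices
  set S : Finset V := M.biUnion id with hS
  have hcover : E ⊆ S.biUnion (fun v => E.filter (fun e => v ∈ e)) := by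
    intro e he
    obtain ⟨m, hm, hd⟩ := hmeet e he
    rw [Finset.not_disjoint_iff] at hd
    obtain ⟨v, hve, hvm⟩ := hd
    exact Finset.mem_biUnion.mpr ⟨v, Finset.mem_biUnion.mpr ⟨m, hm, hvm⟩,
      Finset.mem_filter.mpr ⟨he, hve⟩⟩
  have h1 : E.card ≤ ∑ v ∈ S, (E.filter (fun e => v ∈ e)).card :=
    le_trans (Finset.card_le_card hcover) Finset.card_biUnion_le
  -- each vertex is in at most (n-1).choose (c-1) edges
  have h2 : ∀ v : V, (E.filter (fun e => v ∈ e)).card ≤ (n-1).choose (c-1) := by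
    intro v
    have : ((Finset.univ.erase v).powersetCard (c-1)).card = (n-1).choose (c-1) := by
      rw [Finset.card_powersetCard, Finset.card_erase_of_mem (Finset.mem_univ v),
        Finset.card_univ]
    rw [← this]
    apply Finset.card_le_card_of_injOn (fun e => e.erase v)
    · intro e he
      simp only [Finset.mem_coe, Finset.mem_filter] at he
      rw [Finset.mem_coe, Finset.mem_powersetCard]
      constructor
      · intro x hx
        simp only [Finset.mem_erase] at hx ⊢
        exact ⟨hx.1, Finset.mem_univ x⟩
      · rw [Finset.card_erase_of_mem he.2, hE e he.1]
    · intro a ha b hb hab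
      simp only [Finset.coe_filter, Set.mem_setOf_eq] at ha hb
      have hab' : a.erase v = b.erase v := hab
      rw [← Finset.insert_erase ha.2, ← Finset.insert_erase hb.2, hab']
  have h3 : S.card ≤ c * M.card := by
    calc S.card ≤ ∑ m ∈ M, m.card := Finset.card_biUnion_le
    _ = ∑ m ∈ M, c := Finset.sum_congr rfl (fun m hm => hE m (hME hm))
    _ = c * M.card := by rw [Finset.sum_const, smul_eq_mul, mul_comm]
  set B := (n-1).choose (c-1) with hB
  have hEbound : E.card ≤ c * M.card * B := by
    calc E.card ≤ ∑ v ∈ S, (E.filter (fun e => v ∈ e)).card := h1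
    _ ≤ ∑ v ∈ S, B := Finset.sum_le_sum (fun v _ => h2 v)
    _ = S.card * B := by rw [Finset.sum_const, smul_eq_mul]
    _ ≤ c * M.card * B := Nat.mul_le_mul_right B h3
  have hchoose : n.choose c * c = n * B := by
    have := Nat.add_one_mul_choose_eq (n-1) (c-1)
    have e1 : n - 1 + 1 = n := by omega
    have e2 : c - 1 + 1 = c := by omega
    rw [e1, e2] at this
    rw [hB]
    omega
  have hBpos : 0 < B := Nat.choose_pos (by omega)
  -- real arithmetic
  have hcpos : (0:ℝ) < c := by positivity
  have hBpos' : (0:ℝ) < B := by exact_mod_cast hBpos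
  have key : ε * (n * B) ≤ (c:ℝ)^2 * M.card * B := by
    have hc1 : ε * ((n.choose c : ℕ) : ℝ) * c ≤ (E.card : ℝ) * c :=
      mul_le_mul_of_nonneg_right hdens (le_of_lt hcpos)
    have hc2 : (E.card : ℝ) * c ≤ (c:ℝ)^2 * M.card * B := by
      have : (E.card : ℝ) ≤ (c : ℝ) * M.card * B := by exact_mod_cast hEbound
      calc (E.card : ℝ) * c ≤ ((c:ℝ) * M.card * B) * c :=
        mul_le_mul_of_nonneg_right this (le_of_lt hcpos)
      _ = (c:ℝ)^2 * M.card * B := by ring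
    have hcR : ((n.choose c : ℕ) : ℝ) * c = (n : ℝ) * B := by exact_mod_cast hchoose
    calc ε * (n * B) = ε * ((n.choose c : ℕ) : ℝ) * c := by rw [mul_assoc, ← hcR]
    _ ≤ (E.card : ℝ) * c := hc1
    _ ≤ (c:ℝ)^2 * M.card * B := hc2
  have main : ε / (c:ℝ)^2 * n ≤ (M.card : ℝ) := by
    rw [div_mul_eq_mul_div, div_le_iff₀ (by positivity)]
    have : ε * n * B ≤ ((M.card : ℝ) * (c:ℝ)^2) * B := by nlinarith [key]
    exact le_of_mul_le_mul_right this hBpos'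
  calc ε / (c:ℝ)^2 * ((n:ℝ) - c + 1) ≤ ε / (c:ℝ)^2 * n := by
        apply mul_le_mul_of_nonneg_left _ (by positivity)
        have : (1:ℝ) ≤ c := by exact_mod_cast le_of_lt hc
        linarith
  _ ≤ (M.card : ℝ) := main
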